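/- Let d ≥ 2 and 1/d² ≤ f ≤ 1. Define the d×d real matrix M with diagonal entries M_{11} = b - c and M_{ii} = a + b - c for i ≥ 2, and all off-diagonal entries equal to b, where a = 1/d³, b = f(1-df)/(d²(1-d²f)), c = (1-df)/(d³(1-d²f)). If f > 1/d² (so the quantities are well-defined), then M is positive semidefinite. -/

import Mathlib

theorem dual_feasibility_M_posSemidef (d : ℕ) (hd : 2 ≤ d) (f : ℝ)
    (hf1 : 1 / (d : ℝ) ^ 2 < f) (hf2 : f ≤ 1) :
    let a : ℝ := 1 / (d : ℝ) ^ 3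
    let b : ℝ := f * (1 - (d : ℝ) * f) / ((d : ℝ) ^ 2 * (1 - (d : ℝ) ^ 2 * f))
    let c : ℝ := (1 - (d : ℝ) * f) / ((d : ℝ) ^ 3 * (1 - (d : ℝ) ^ 2 * f))
    Matrix.PosSemidef (Matrix.of fun i j : Fin d =>
      if i = j then (if (i : ℕ) = 0 then b - c else a + b - c) else b) := by
  intro a b c
  have hd2 : (2 : ℝ) ≤ (d : ℝ) := by exact_mod_cast hd
  have hd0 : (0 : ℝ) < (d : ℝ) := by linarith
  have hdne : (d : ℝ) ≠ 0 := ne_of_gt hd0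
  have hf0 : 0 < f := lt_trans (by positivity) hf1
  have he : 0 < (d : ℝ) ^ 2 * f - 1 := by
    have h2 : (0 : ℝ) < (d : ℝ) ^ 2 := by positivity
    rw [div_lt_iff₀ h2] at hf1
    nlinarith
  have h1ne : 1 - (d : ℝ) ^ 2 * f ≠ 0 := by intro h; nlinarith
  rw [Matrix.posSemidef_iff_dotProduct_mulVec]
  constructor
  · -- Hermitian
    ext i j
    simp only [Matrix.conjTranspose_apply, Matrix.of_apply, star_trivial]
    by_cases h : i = j
    · subst h; rfl
    · simp [h, Ne.symm h]
  · intro x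
    have hd0' : 0 < d := by omega
    set i0 : Fin d := ⟨0, hd0'⟩ with hi0
    -- rewrite each row sum
    have hM : ∀ i j : Fin d,
        (Matrix.of fun i j : Fin d =>
          if i = j then (if (i : ℕ) = 0 then b - c else a + b - c) else b) i j
        = b + (if i = j then (if i = i0 then -c else a - c) else 0) := by
      intro i j
      simp only [Matrix.of_apply]
      by_cases h : i = j
      · subst h
        by_cases h0 : i = i0
        · have : (i : ℕ) = 0 := by rw [h0]
          simp [h0, this, hi0]; ring
        · have : (i : ℕ) ≠ 0 := by
            intro hc; exact h0 (Fin.ext hc)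
          simp [h0, this]; ring
      · simp [h]
    set S : ℝ := ∑ j, x j with hS
    have hrow : ∀ i : Fin d,
        (∑ j, (Matrix.of fun i j : Fin d =>
          if i = j then (if (i : ℕ) = 0 then b - c else a + b - c) else b) i j * x j)
        = b * S + (if i = i0 then -c else a - c) * x i := by
      intro i
      calc (∑ j, (Matrix.of fun i j : Fin d =>
          if i = j then (if (i : ℕ) = 0 then b - c else a + b - c) else b) i j * x j)
          = ∑ j, (b * x j + (if i = j then ((if i = i0 then -c else a - c) * x j) else 0)) := by
            apply Finset.sum_congr rfl
            intro j _
            rw [hM i j]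
            split_ifs with h <;> ring
        _ = b * S + (if i = i0 then -c else a - c) * x i := by
            rw [Finset.sum_add_distrib, ← Finset.mul_sum, Finset.sum_ite_eq]
            simp [hS]
    have hquad : dotProduct (star x) ((Matrix.of fun i j : Fin d =>
        if i = j then (if (i : ℕ) = 0 then b - c else a + b - c) else b).mulVec x)
        = b * S ^ 2 + (-c) * (x i0) ^ 2
          + (a - c) * ∑ i ∈ Finset.univ.erase i0, (x i) ^ 2 := by
      simp only [dotProduct, Matrix.mulVec, star_trivial, Pi.star_apply]
      calc (∑ i, x i * ∑ j, (Matrix.of fun i j : Fin d =>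
            if i = j then (if (i : ℕ) = 0 then b - c else a + b - c) else b) i j * x j)
          = ∑ i, (x i * (b * S) + (if i = i0 then -c else a - c) * (x i) ^ 2) := by
            apply Finset.sum_congr rfl
            intro i _
            rw [hrow i]
            split_ifs with h <;> ring
        _ = b * S ^ 2 + ∑ i, (if i = i0 then -c else a - c) * (x i) ^ 2 := by
            rw [Finset.sum_add_distrib, ← Finset.sum_mul]
            rw [← hS]; ring_nf
        _ = b * S ^ 2 + ((-c) * (x i0) ^ 2
            + (a - c) * ∑ i ∈ Finset.univ.erase i0, (x i) ^ 2) := by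
            congr 1
            rw [← Finset.add_sum_erase _ _ (Finset.mem_univ i0)]
            simp only [if_pos rfl]
            congr 1
            rw [Finset.mul_sum]
            apply Finset.sum_congr rfl
            intro i hi
            rw [if_neg (Finset.ne_of_mem_erase hi)]
        _ = _ := by ring
    rw [hquad]
    set P : ℝ := ∑ i ∈ Finset.univ.erase i0, (x i) ^ 2 with hP
    set R : ℝ := ∑ i ∈ Finset.univ.erase i0, x i with hR
    have hP0 : 0 ≤ P := Finset.sum_nonneg fun i _ => sq_nonneg _
    have hSxR : S = x i0 + R := by
      rw [hS, hR, ← Finset.add_sum_erase _ _ (Finset.mem_univ i0)]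
    have hcard : (Finset.univ.erase i0).card = d - 1 := by
      rw [Finset.card_erase_of_mem (Finset.mem_univ i0), Finset.card_univ, Fintype.card_fin]
    have hcauchy : R ^ 2 ≤ ((d : ℝ) - 1) * P := by
      have h := sq_sum_le_card_mul_sum_sq (s := Finset.univ.erase i0) (f := x)
      rw [hcard] at h
      have hcast : ((d - 1 : ℕ) : ℝ) = (d : ℝ) - 1 := by
        have : 1 ≤ d := by omega
        push_cast [this]; ring
      rw [← hR, ← hP, hcast] at h
      exact h
    -- rewrite the scalar expression with common denominator
    have hkey : b * S ^ 2 + (-c) * (x i0) ^ 2 + (a - c) * P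
        = ((d : ℝ) * f * ((d : ℝ) * f - 1) * S ^ 2 - ((d : ℝ) * f - 1) * (x i0) ^ 2
            + (d : ℝ) * f * ((d : ℝ) - 1) * P) / ((d : ℝ) ^ 3 * ((d : ℝ) ^ 2 * f - 1)) := by
      show f * (1 - (d : ℝ) * f) / ((d : ℝ) ^ 2 * (1 - (d : ℝ) ^ 2 * f)) * S ^ 2
          + (-((1 - (d : ℝ) * f) / ((d : ℝ) ^ 3 * (1 - (d : ℝ) ^ 2 * f)))) * (x i0) ^ 2
          + (1 / (d : ℝ) ^ 3 - (1 - (d : ℝ) * f) / ((d : ℝ) ^ 3 * (1 - (d : ℝ) ^ 2 * f))) * P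
          = _
      have h1ne' : (1 : ℝ) - f * (d : ℝ) ^ 2 ≠ 0 := by intro h; nlinarith
      rw [eq_div_iff (mul_pos (by positivity) he).ne']
      field_simp
      ring
    rw [hkey]
    apply div_nonneg _ (by positivity)
    rw [hSxR]
    nlinarith [sq_nonneg ((d : ℝ) * f * R + ((d : ℝ) * f - 1) * x i0),
      mul_nonneg (by positivity : (0:ℝ) ≤ (d : ℝ) * f) (sub_nonneg.2 hcauchy)]
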